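/- Let e ≥ 1, p coprime to e, K an integer, and for 1 ≤ n ≤ e define Y_n := Σ_{k=1}^n ⌈(p·k-K)/e⌉ - #B_n where B_n := {1 ≤ i ≤ n : j_i ≤ n} and j_i ∈ {1,...,e} is the least positive residue of p·i - K modulo e (set Y_0 := 0). If p ≥ 3e, then for all 0 ≤ n ≤ e-2 one has 2·Y_{n+1} < Y_n + Y_{n+2} (i.e., the sequence of increments Y_{n+1} - Y_n is strictly increasing). -/

import Mathlib

theorem stmt12 (e : ℕ) (p K : ℤ) (he : 1 ≤ e) (hcop : IsCoprime p (e : ℤ))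
    (hp : 3 * (e : ℤ) ≤ p) (j : ℕ → ℕ)
    (hj : ∀ i, 1 ≤ j i ∧ j i ≤ e ∧ (j i : ℤ) ≡ p * i - K [ZMOD e])
    (Y : ℕ → ℤ)
    (hY : ∀ n, Y n =
      (∑ k ∈ Finset.Icc 1 n, ⌈((p * (k : ℤ) - K : ℤ) : ℚ) / (e : ℚ)⌉) -
        ((Finset.Icc 1 n).filter (fun i => j i ≤ n)).card) :
    ∀ n, n ≤ e - 2 → 2 * Y (n + 1) < Y n + Y (n + 2) := by
  intro n hn
  have he0 : (0:ℚ) < (e:ℚ) := by exact_mod_cast he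
  have h0 := hY n
  have h1 := hY (n+1)
  have h2 := hY (n+1+1)
  have hsum : ∀ m : ℕ,
      (∑ k ∈ Finset.Icc 1 (m+1), ⌈((p * (k : ℤ) - K : ℤ) : ℚ) / (e : ℚ)⌉) =
      (∑ k ∈ Finset.Icc 1 m, ⌈((p * (k : ℤ) - K : ℤ) : ℚ) / (e : ℚ)⌉) +
        ⌈((p * ((m+1 : ℕ) : ℤ) - K : ℤ) : ℚ) / (e : ℚ)⌉ := by
    intro m
    exact Finset.sum_Icc_succ_top (by omega) _
  rw [hsum n] at h1
  rw [hsum (n+1), hsum n] at h2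
  -- ceiling step
  have hceil : ⌈((p * ((n+1 : ℕ) : ℤ) - K : ℤ) : ℚ) / (e : ℚ)⌉ + 3 ≤
      ⌈((p * ((n+1+1 : ℕ) : ℤ) - K : ℤ) : ℚ) / (e : ℚ)⌉ := by
    have hkey : ((p * ((n+1 : ℕ) : ℤ) - K : ℤ) : ℚ) / (e : ℚ) + (3:ℤ) ≤
        ((p * ((n+1+1 : ℕ) : ℤ) - K : ℤ) : ℚ) / (e : ℚ) := by
      rw [div_add' _ _ _ (ne_of_gt he0), div_le_div_iff₀ he0 he0]
      have hp' : 3 * (e:ℚ) ≤ (p:ℚ) := by exact_mod_cast hp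
      push_cast
      nlinarith [he0]
    calc ⌈((p * ((n+1 : ℕ) : ℤ) - K : ℤ) : ℚ) / (e : ℚ)⌉ + 3
        = ⌈((p * ((n+1 : ℕ) : ℤ) - K : ℤ) : ℚ) / (e : ℚ) + (3:ℤ)⌉ :=
          (Int.ceil_add_intCast _ _).symm
      _ ≤ _ := Int.ceil_le_ceil hkey
  -- card monotone
  have hmono : ((Finset.Icc 1 n).filter (fun i => j i ≤ n)).card ≤
      ((Finset.Icc 1 (n+1)).filter (fun i => j i ≤ n+1)).card := by
    apply Finset.card_le_card
    intro i hi
    simp only [Finset.mem_filter, Finset.mem_Icc] at hi ⊢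
    omega
  -- card step bound
  have hstep : ((Finset.Icc 1 (n+1+1)).filter (fun i => j i ≤ n+1+1)).card ≤
      ((Finset.Icc 1 (n+1)).filter (fun i => j i ≤ n+1)).card + 2 := by
    have hsub : (Finset.Icc 1 (n+1+1)).filter (fun i => j i ≤ n+1+1) ⊆
        ((Finset.Icc 1 (n+1)).filter (fun i => j i ≤ n+1)) ∪
          insert (n+1+1) ((Finset.Icc 1 (n+1+1)).filter (fun i => j i = n+1+1)) := by
      intro i hi
      simp only [Finset.mem_filter, Finset.mem_Icc, Finset.mem_union,
        Finset.mem_insert] at hi ⊢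
      omega
    have hone : ((Finset.Icc 1 (n+1+1)).filter (fun i => j i = n+1+1)).card ≤ 1 := by
      rw [Finset.card_le_one]
      intro a ha b hb
      simp only [Finset.mem_filter, Finset.mem_Icc] at ha hb
      obtain ⟨⟨ha1, ha2⟩, hja⟩ := ha
      obtain ⟨⟨hb1, hb2⟩, hjb⟩ := hb
      have hea : n+1+1 ≤ e := hja ▸ (hj a).2.1
      have hab : ((j a : ℕ) : ℤ) = ((j b : ℕ) : ℤ) := by rw [hja, hjb]
      have hm1 : p * (a:ℤ) - K ≡ p * (b:ℤ) - K [ZMOD (e:ℤ)] := by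
        calc p * (a:ℤ) - K ≡ ((j a : ℕ) : ℤ) [ZMOD (e:ℤ)] := ((hj a).2.2).symm
          _ = ((j b : ℕ) : ℤ) := hab
          _ ≡ p * (b:ℤ) - K [ZMOD (e:ℤ)] := (hj b).2.2
      have hm2 : p * (a:ℤ) ≡ p * (b:ℤ) [ZMOD (e:ℤ)] := by
        have := hm1.add_right K
        simpa using this
      have hgcd : Int.gcd (e:ℤ) p = 1 := Int.isCoprime_iff_gcd_eq_one.mp hcop.symm
      have hm3 : (a:ℤ) ≡ (b:ℤ) [ZMOD (e:ℤ)] := by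
        have := Int.ModEq.cancel_left_div_gcd (by exact_mod_cast he.trans_lt' Nat.zero_lt_one) hm2
        simpa [hgcd] using this
      have hdvd : (e:ℤ) ∣ (b:ℤ) - (a:ℤ) := hm3.dvd
      have hz : (b:ℤ) - (a:ℤ) = 0 := by
        apply Int.eq_zero_of_abs_lt_dvd hdvd
        rw [abs_lt]
        constructor <;> [skip; skip] <;>
          · have : (a:ℤ) ≤ (n:ℤ)+1+1 := by exact_mod_cast ha2
            have : (b:ℤ) ≤ (n:ℤ)+1+1 := by exact_mod_cast hb2
            have : (1:ℤ) ≤ (a:ℤ) := by exact_mod_cast ha1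
            have : (1:ℤ) ≤ (b:ℤ) := by exact_mod_cast hb1
            have : ((n:ℤ))+1+1 ≤ (e:ℤ) := by exact_mod_cast hea
            omega
      have : (a:ℤ) = (b:ℤ) := by omega
      exact_mod_cast this
    calc ((Finset.Icc 1 (n+1+1)).filter (fun i => j i ≤ n+1+1)).card
        ≤ (((Finset.Icc 1 (n+1)).filter (fun i => j i ≤ n+1)) ∪
            insert (n+1+1) ((Finset.Icc 1 (n+1+1)).filter (fun i => j i = n+1+1))).card :=
          Finset.card_le_card hsub
      _ ≤ ((Finset.Icc 1 (n+1)).filter (fun i => j i ≤ n+1)).card +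
            (insert (n+1+1) ((Finset.Icc 1 (n+1+1)).filter (fun i => j i = n+1+1))).card :=
          Finset.card_union_le _ _
      _ ≤ ((Finset.Icc 1 (n+1)).filter (fun i => j i ≤ n+1)).card +
            (((Finset.Icc 1 (n+1+1)).filter (fun i => j i = n+1+1)).card + 1) := by
          gcongr
          exact Finset.card_insert_le _ _
      _ ≤ _ := by omega
  have hmono' : (((Finset.Icc 1 n).filter (fun i => j i ≤ n)).card : ℤ) ≤
      (((Finset.Icc 1 (n+1)).filter (fun i => j i ≤ n+1)).card : ℤ) := by exact_mod_cast hmono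
  have hstep' : (((Finset.Icc 1 (n+1+1)).filter (fun i => j i ≤ n+1+1)).card : ℤ) ≤
      (((Finset.Icc 1 (n+1)).filter (fun i => j i ≤ n+1)).card : ℤ) + 2 := by exact_mod_cast hstep
  show 2 * Y (n + 1) < Y n + Y (n + 1 + 1)
  linarith [hceil, hmono', hstep', h0, h1, h2]
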